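/- Let K be a commutative ring, A and B associative K-algebras, M an A-bimodule and N a B-bimodule. Define Q_A(M) = M / span{am − ma : a ∈ A, m ∈ M}. Then the identity on M ⊗_K N induces a natural isomorphism of K-modules Q_A(M) ⊗_K Q_B(N) ≅ Q_{A⊗B}(M ⊗ N), where M ⊗ N is a bimodule over A ⊗_K B in the evident way. -/

import Mathlib

open TensorProduct

variable (K : Type) [CommRing K]

section
variable {A : Type} [Ring A] [Algebra K A] {M : Type} [AddCommGroup M] [Module K M]

/-- For a bimodule (given by commuting left and right actions `actL`, `actR` of `A`
on `M`), `Q_A(M)` is the quotient of `M` by the sub-`K`-module generated by the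
commutators `a • m − m • a`. -/
def commSub (actL actR : A →ₗ[K] M →ₗ[K] M) : Submodule K M :=
  Submodule.span K {v | ∃ (a : A) (m : M), v = actL a m - actR a m}

/-- `Q_A(M) = M / span{am − ma}`. -/
def Q (actL actR : A →ₗ[K] M →ₗ[K] M) : Type _ := M ⧸ commSub K actL actR

instance (actL actR : A →ₗ[K] M →ₗ[K] M) : AddCommGroup (Q K actL actR) := by
  unfold Q; infer_instance

instance (actL actR : A →ₗ[K] M →ₗ[K] M) : Module K (Q K actL actR) := by
  unfold Q; infer_instance

/-- The projection `M → Q_A(M)`. -/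
def Qmk (actL actR : A →ₗ[K] M →ₗ[K] M) : M →ₗ[K] Q K actL actR :=
  Submodule.mkQ _

end

variable {A B : Type} [Ring A] [Algebra K A] [Ring B] [Algebra K B]
  {M : Type} [AddCommGroup M] [Module K M] {N : Type} [AddCommGroup N] [Module K N]

/-- The induced action of `A ⊗[K] B` on `M ⊗[K] N`: `(a ⊗ b) • (m ⊗ n) = (a • m) ⊗ (b • n)`. -/
noncomputable def tensorAct (actA : A →ₗ[K] M →ₗ[K] M) (actB : B →ₗ[K] N →ₗ[K] N) :
    (A ⊗[K] B) →ₗ[K] (M ⊗[K] N) →ₗ[K] (M ⊗[K] N) :=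
  TensorProduct.lift (((TensorProduct.mapBilinear (RingHom.id K) M N M N).comp actA).compl₂ actB)


lemma Qmk_comm_zero {A' M' : Type} [Ring A'] [Algebra K A'] [AddCommGroup M'] [Module K M']
    (actL actR : A' →ₗ[K] M' →ₗ[K] M') (a : A') (m : M') :
    Qmk K actL actR (actL a m - actR a m) = 0 := by
  show Submodule.Quotient.mk _ = 0
  rw [Submodule.Quotient.mk_eq_zero]
  exact Submodule.subset_span ⟨a, m, rfl⟩

lemma tensorAct_tmul (actA : A →ₗ[K] M →ₗ[K] M) (actB : B →ₗ[K] N →ₗ[K] N)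
    (a : A) (b : B) (m : M) (n : N) :
    tensorAct K actA actB (a ⊗ₜ[K] b) (m ⊗ₜ[K] n) = actA a m ⊗ₜ[K] actB b n := by
  simp [tensorAct]

/-- Let `K` be a commutative ring, `A` and `B` associative `K`-algebras, `M` an
`A`-bimodule and `N` a `B`-bimodule (with left and right actions `lA, rA` and `lB, rB`).
Then the identity on `M ⊗[K] N` induces a natural isomorphism of `K`-modules
`Q_A(M) ⊗_K Q_B(N) ≅ Q_{A⊗B}(M ⊗ N)`, where `M ⊗ N` is an `A ⊗[K] B`-bimodule in the
evident way. -/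
theorem Q_tensor_iso (lA rA : A →ₗ[K] M →ₗ[K] M) (lB rB : B →ₗ[K] N →ₗ[K] N)
    (hlA : ∀ (a a' : A) (m : M), lA (a * a') m = lA a (lA a' m)) (hlA1 : ∀ m, lA 1 m = m)
    (hrA : ∀ (a a' : A) (m : M), rA (a * a') m = rA a' (rA a m)) (hrA1 : ∀ m, rA 1 m = m)
    (hA_comm : ∀ (a a' : A) (m : M), lA a (rA a' m) = rA a' (lA a m))
    (hlB : ∀ (b b' : B) (n : N), lB (b * b') n = lB b (lB b' n)) (hlB1 : ∀ n, lB 1 n = n)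
    (hrB : ∀ (b b' : B) (n : N), rB (b * b') n = rB b' (rB b n)) (hrB1 : ∀ n, rB 1 n = n)
    (hB_comm : ∀ (b b' : B) (n : N), lB b (rB b' n) = rB b' (lB b n)) :
    ∃ e : (Q K lA rA) ⊗[K] (Q K lB rB) ≃ₗ[K] Q K (tensorAct K lA lB) (tensorAct K rA rB),
      ∀ (m : M) (n : N),
        e (Qmk K lA rA m ⊗ₜ[K] Qmk K lB rB n)
          = Qmk K (tensorAct K lA lB) (tensorAct K rA rB) (m ⊗ₜ[K] n) := by
  set mkT := Qmk K (tensorAct K lA lB) (tensorAct K rA rB) with hmkT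
  -- generator vanishing in QT
  have hT : ∀ (x : A ⊗[K] B) (t : M ⊗[K] N),
      mkT (tensorAct K lA lB x t) = mkT (tensorAct K rA rB x t) → True := fun _ _ _ => trivial
  -- forward bilinear map
  set f0 : M →ₗ[K] N →ₗ[K] Q K (tensorAct K lA lB) (tensorAct K rA rB) :=
    (TensorProduct.mk K M N).compr₂ mkT with hf0
  have h1 : commSub K lA rA ≤ LinearMap.ker f0 := by
    rw [commSub, Submodule.span_le]
    rintro v ⟨a, m, rfl⟩
    simp only [SetLike.mem_coe, LinearMap.mem_ker]
    ext n
    have := Qmk_comm_zero K (tensorAct K lA lB) (tensorAct K rA rB) (a ⊗ₜ[K] (1 : B)) (m ⊗ₜ[K] n)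
    rw [tensorAct_tmul, tensorAct_tmul, hlB1, hrB1] at this
    simpa [f0, TensorProduct.sub_tmul] using this
  set g : Q K lA rA →ₗ[K] N →ₗ[K] Q K (tensorAct K lA lB) (tensorAct K rA rB) :=
    Submodule.liftQ _ f0 h1 with hg
  have h2 : commSub K lB rB ≤ LinearMap.ker g.flip := by
    rw [commSub, Submodule.span_le]
    rintro v ⟨b, n, rfl⟩
    simp only [SetLike.mem_coe, LinearMap.mem_ker]
    apply Submodule.linearMap_qext
    ext m
    have := Qmk_comm_zero K (tensorAct K lA lB) (tensorAct K rA rB) ((1 : A) ⊗ₜ[K] b) (m ⊗ₜ[K] n)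
    rw [tensorAct_tmul, tensorAct_tmul, hlA1, hrA1] at this
    rw [← TensorProduct.tmul_sub] at this
    exact this
  set φ : (Q K lA rA) ⊗[K] (Q K lB rB) →ₗ[K] Q K (tensorAct K lA lB) (tensorAct K rA rB) :=
    TensorProduct.lift ((Submodule.liftQ _ g.flip h2).flip) with hφ
  -- inverse
  set ψ0 : M ⊗[K] N →ₗ[K] (Q K lA rA) ⊗[K] (Q K lB rB) :=
    TensorProduct.map (Qmk K lA rA) (Qmk K lB rB) with hψ0
  have key : ∀ (x : A ⊗[K] B) (t : M ⊗[K] N),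
      ψ0 (tensorAct K lA lB x t) = ψ0 (tensorAct K rA rB x t) := by
    intro x t
    induction x using TensorProduct.induction_on with
    | zero => simp
    | add x y hx hy => simp [map_add, LinearMap.add_apply, hx, hy]
    | tmul a b =>
      induction t using TensorProduct.induction_on with
      | zero => simp
      | add s t hs ht => simp [map_add, hs, ht]
      | tmul m n =>
        rw [tensorAct_tmul, tensorAct_tmul]
        simp only [ψ0, TensorProduct.map_tmul]
        have hm : Qmk K lA rA (lA a m) = Qmk K lA rA (rA a m) := by
          rw [← sub_eq_zero, ← map_sub]; exact Qmk_comm_zero K lA rA a m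
        have hn : Qmk K lB rB (lB b n) = Qmk K lB rB (rB b n) := by
          rw [← sub_eq_zero, ← map_sub]; exact Qmk_comm_zero K lB rB b n
        rw [hm, hn]
  have h3 : commSub K (tensorAct K lA lB) (tensorAct K rA rB) ≤ LinearMap.ker ψ0 := by
    rw [commSub, Submodule.span_le]
    rintro v ⟨x, t, rfl⟩
    simp only [SetLike.mem_coe, LinearMap.mem_ker, map_sub, key x t, sub_self]
  set ψ : Q K (tensorAct K lA lB) (tensorAct K rA rB) →ₗ[K] (Q K lA rA) ⊗[K] (Q K lB rB) :=
    Submodule.liftQ _ ψ0 h3 with hψ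
  have happly : ∀ (m : M) (n : N), φ (Qmk K lA rA m ⊗ₜ[K] Qmk K lB rB n) = mkT (m ⊗ₜ[K] n) := by
    intro m n
    rfl
  have h4 : φ.comp ψ = LinearMap.id := by
    apply Submodule.linearMap_qext
    apply TensorProduct.ext'
    intro m n
    show φ (ψ (mkT (m ⊗ₜ[K] n))) = mkT (m ⊗ₜ[K] n)
    rw [show ψ (mkT (m ⊗ₜ[K] n)) = Qmk K lA rA m ⊗ₜ[K] Qmk K lB rB n from rfl, happly]
  have h5 : ψ.comp φ = LinearMap.id := by
    apply TensorProduct.ext'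
    intro q q'
    obtain ⟨m, rfl⟩ := Submodule.mkQ_surjective _ q
    obtain ⟨n, rfl⟩ := Submodule.mkQ_surjective _ q'
    show ψ (φ (Qmk K lA rA m ⊗ₜ[K] Qmk K lB rB n)) = Qmk K lA rA m ⊗ₜ[K] Qmk K lB rB n
    rw [happly]
    rfl
  exact ⟨LinearEquiv.ofLinear φ ψ h4 h5, happly⟩
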